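/- Under the SPPA conditions A_k = a_k b_k, 0 ≤ A_{k+1} − A_k ≤ d·a_k for some d ∈ (0,1), and a_k ≥ γ A_k for some γ > 0 and all k, the iterates satisfy lim_{k→∞} A_k(f(x_k) − f*) = 0. -/

import Mathlib

open Set Filter Topology


lemma prox_subgrad {H : Type*} [NormedAddCommGroup H] [InnerProductSpace ℝ H]
    (f : H → ℝ) (hconv : ConvexOn ℝ (Set.univ : Set H) f)
    (μ : ℝ) (hμ : 0 < μ) (u xp : H)
    (hmin : IsMinOn (fun y => f y + μ * ‖y - u‖^2) Set.univ xp) (y : H) :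
    f xp ≤ f y + (2*μ) * (inner ℝ (y - xp) (xp - u) : ℝ) := by
  by_contra hcon
  push_neg at hcon
  set I : ℝ := (inner ℝ (y - xp) (xp - u) : ℝ) with hI
  set L : ℝ := f xp - (f y + 2*μ*I) with hL
  have hLpos : 0 < L := by rw [hL]; linarith
  set C : ℝ := μ * ‖y - xp‖^2 with hC
  have hC0 : 0 ≤ C := by positivity
  have key : ∀ t : ℝ, 0 < t → t ≤ 1 → L ≤ t * C := by
    intro t ht ht1
    have hpmem := isMinOn_iff.mp hmin ((1-t) • xp + t • y) (Set.mem_univ _)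
    have hcv := hconv.2 (Set.mem_univ xp) (Set.mem_univ y)
      (by linarith : (0:ℝ) ≤ 1 - t) ht.le (by ring)
    have hexp : ‖((1-t) • xp + t • y) - u‖^2
        = ‖xp - u‖^2 + 2*(t * (inner ℝ (xp - u) (y - xp) : ℝ)) + t^2 * ‖y - xp‖^2 := by
      have hpe : ((1-t) • xp + t • y) - u = (xp - u) + t • (y - xp) := by module
      rw [hpe, norm_add_sq_real, real_inner_smul_right, norm_smul, mul_pow,
        Real.norm_eq_abs, sq_abs]
    have hic : (inner ℝ (xp - u) (y - xp) : ℝ) = I := real_inner_comm _ _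
    rw [hexp, hic] at hpmem
    simp only [smul_eq_mul] at hcv
    have h3 : t * L ≤ t * (t * C) := by
      rw [hL, hC]; nlinarith [hpmem, hcv]
    exact le_of_mul_le_mul_left h3 ht
  have ht0 : 0 < min 1 (L/(C+1)) := lt_min one_pos (div_pos hLpos (by positivity))
  have h4 := key _ ht0 (min_le_left _ _)
  have h5 : min 1 (L/(C+1)) * C ≤ (L/(C+1)) * C :=
    mul_le_mul_of_nonneg_right (min_le_right _ _) hC0
  have h6 : (L/(C+1)) * C < L := by
    rw [div_mul_eq_mul_div, div_lt_iff₀ (by positivity)]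
    nlinarith
  linarith


/-- `o(1/A_k)` rate for SPPA: if `A_k = a_k b_k`,
`0 ≤ A_{k+1} - A_k ≤ d a_k` with `d ∈ (0,1)`, `c_k ≥ a_k/2`, and `a_k ≥ γ A_k`
for some `γ > 0`, then `A_k (f(x_k) - f*) → 0`. -/
theorem sppa_stmt7
    {H : Type*} [NormedAddCommGroup H] [InnerProductSpace ℝ H] [CompleteSpace H]
    (f : H → ℝ)
    (hconv : ConvexOn ℝ Set.univ f) (hlsc : LowerSemicontinuous f)
    (xs : H) (hmin : ∀ y, f xs ≤ f y)
    (a b c : ℕ → ℝ)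
    (hapos : ∀ k, 0 < a k) (hbpos : ∀ k, 0 < b k) (hcpos : ∀ k, 0 < c k)
    (x xt z : ℕ → H) (hz0 : z 0 = x 0)
    (hxt : ∀ k : ℕ, xt (k+1) = (1 / (b k + 1)) • z k + (b k / (b k + 1)) • x k)
    (hxmin : ∀ k : ℕ, IsMinOn
      (fun y => f y + ((b k + 1) / (2 * c k)) * ‖y - xt (k+1)‖^2)
      Set.univ (x (k+1)))
    (hzk1 : ∀ k : ℕ,
      z (k+1) = z k + ((a k * (b k + 1)) / c k) • (x (k+1) - xt (k+1)))
    (hca : ∀ k : ℕ, c k ≥ a k / 2)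
    (d : ℝ) (hd0 : 0 < d) (hd1 : d < 1)
    (hAmono : ∀ k : ℕ, 0 ≤ a (k+1) * b (k+1) - a k * b k)
    (hAle : ∀ k : ℕ, a (k+1) * b (k+1) - a k * b k ≤ d * a k)
    (γ : ℝ) (hγ : 0 < γ)
    (haA : ∀ k : ℕ, a k ≥ γ * (a k * b k)) :
    Filter.Tendsto (fun k : ℕ => a k * b k * (f (x k) - f xs))
      Filter.atTop (nhds 0) := by
  have hG : ∀ k, 0 ≤ f (x k) - f xs := fun k => by linarith [hmin (x k)]
  -- subgradient inequality from the prox step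
  have hsg : ∀ (k : ℕ) (y : H), f (x (k+1)) ≤ f y
      + ((b k + 1)/(c k)) * (inner ℝ (y - x (k+1)) (x (k+1) - xt (k+1)) : ℝ) := by
    intro k y
    have hb1 : (0:ℝ) < b k + 1 := by linarith [hbpos k]
    have hc := hcpos k
    have hμ : 0 < (b k + 1)/(2 * c k) := div_pos hb1 (by linarith)
    have h := prox_subgrad f hconv _ hμ (xt (k+1)) (x (k+1)) (hxmin k) y
    have e : 2 * ((b k + 1)/(2 * c k)) = (b k + 1)/(c k) := by
      field_simp
    rw [e] at h
    exact h
  set E : ℕ → ℝ := fun k => a k * b k * (f (x k) - f xs) + (1/2) * ‖z k - xs‖^2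
    with hE
  have hEnn : ∀ k, 0 ≤ E k := by
    intro k
    have h1 : 0 ≤ a k * b k * (f (x k) - f xs) :=
      mul_nonneg (mul_nonneg (hapos k).le (hbpos k).le) (hG k)
    have h2 : 0 ≤ (1/2 : ℝ) * ‖z k - xs‖^2 := by positivity
    simp only [hE]; linarith
  -- one-step decrease
  have hstep : ∀ k : ℕ, E (k+1) + (1-d) * (a k * (f (x (k+1)) - f xs)) ≤ E k := by
    intro k
    have hb1 : (0:ℝ) < b k + 1 := by linarith [hbpos k]
    have hc := hcpos k
    have ha := hapos k
    set r : ℝ := (b k + 1) / c k with hrdef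
    have hr : 0 < r := div_pos hb1 hc
    set w : H := x (k+1) - xt (k+1) with hw
    have h1 := hsg k (x k)
    have h2 := hsg k xs
    rw [← hrdef, ← hw] at h1 h2
    -- z update and norm expansion
    have hz1 : z (k+1) - xs = (z k - xs) + (a k * r) • w := by
      rw [hzk1 k, hrdef, hw]
      rw [show a k * (b k + 1) / c k = a k * ((b k + 1) / c k) by ring]
      abel
    have hnorm : ‖z (k+1) - xs‖^2 = ‖z k - xs‖^2
        + 2*((a k * r) * (inner ℝ (z k - xs) w : ℝ)) + (a k * r)^2 * ‖w‖^2 := by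
      rw [hz1, norm_add_sq_real, real_inner_smul_right, norm_smul, mul_pow,
        Real.norm_eq_abs, sq_abs]
    -- vector identity
    have hzt : (b k + 1) • xt (k+1) = z k + (b k) • x k := by
      rw [hxt k, smul_add, smul_smul, smul_smul]
      have e1 : (b k + 1) * (1/(b k + 1)) = 1 := by field_simp
      have e2 : (b k + 1) * (b k/(b k + 1)) = b k := by field_simp
      rw [e1, e2, one_smul]
    have hz : z k = (b k + 1) • xt (k+1) - (b k) • x k := by rw [hzt]; abel
    have hv : (a k * b k) • (x k - x (k+1)) + (a k) • (xs - x (k+1))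
        + (a k) • (z k - xs) = (-(a k * (b k + 1))) • w := by
      rw [hw, hz]; module
    have hvec : (a k * b k) * (inner ℝ (x k - x (k+1)) w : ℝ)
        + (a k) * (inner ℝ (xs - x (k+1)) w : ℝ)
        + (a k) * (inner ℝ (z k - xs) w : ℝ)
        = -(a k * (b k + 1)) * ‖w‖^2 := by
      have h := congrArg (fun v : H => (inner ℝ v w : ℝ)) hv
      simpa [inner_add_left, real_inner_smul_left, real_inner_self_eq_norm_sq]
        using h
    have hN : (0:ℝ) ≤ ‖w‖^2 := by positivity
    have hsr : (a k * r)^2/2 ≤ r * (a k * (b k + 1)) := by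
      have hcr : b k + 1 = r * c k := by rw [hrdef]; field_simp
      rw [hcr]
      have h5 : a k * a k ≤ a k * (2 * c k) := by nlinarith [hca k, ha]
      nlinarith [mul_le_mul_of_nonneg_left h5 (by positivity : (0:ℝ) ≤ r^2/2)]
    have p1 : (a k * b k) * f (x (k+1)) ≤ (a k * b k)
        * (f (x k) + r * (inner ℝ (x k - x (k+1)) w : ℝ)) :=
      mul_le_mul_of_nonneg_left h1 (mul_nonneg ha.le (hbpos k).le)
    have p2 : a k * f (x (k+1)) ≤ a k
        * (f xs + r * (inner ℝ (xs - x (k+1)) w : ℝ)) :=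
      mul_le_mul_of_nonneg_left h2 ha.le
    have p3 : (a (k+1) * b (k+1) - a k * b k) * (f (x (k+1)) - f xs)
        ≤ (d * a k) * (f (x (k+1)) - f xs) :=
      mul_le_mul_of_nonneg_right (hAle k) (hG (k+1))
    have p4 : ((a k * r)^2/2) * ‖w‖^2 ≤ (r * (a k * (b k + 1))) * ‖w‖^2 :=
      mul_le_mul_of_nonneg_right hsr hN
    have p5 : r * ((a k * b k) * (inner ℝ (x k - x (k+1)) w : ℝ)
        + (a k) * (inner ℝ (xs - x (k+1)) w : ℝ)
        + (a k) * (inner ℝ (z k - xs) w : ℝ))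
        = r * (-(a k * (b k + 1)) * ‖w‖^2) := by rw [hvec]
    simp only [hE]
    rw [hnorm]
    linarith [p1, p2, p3, p4, p5]
  -- telescoping bound
  have hsum : ∀ n : ℕ, ∑ k ∈ Finset.range n,
      (1-d) * (a k * (f (x (k+1)) - f xs)) ≤ E 0 := by
    intro n
    have tele : ∑ k ∈ Finset.range n, (E k - E (k+1)) = E 0 - E n :=
      Finset.sum_range_sub' E n
    have hle : ∑ k ∈ Finset.range n, (1-d) * (a k * (f (x (k+1)) - f xs))
        ≤ ∑ k ∈ Finset.range n, (E k - E (k+1)) :=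
      Finset.sum_le_sum (fun k _ => by linarith [hstep k])
    rw [tele] at hle
    linarith [hEnn n]
  -- a k controls A (k+1)
  set ρ : ℝ := (1-d) * (γ / (1 + d * γ)) with hρ
  have hρ0 : 0 < ρ := by
    apply mul_pos (by linarith)
    exact div_pos hγ (by nlinarith)
  have hterm : ∀ k : ℕ, ρ * (a (k+1) * b (k+1) * (f (x (k+1)) - f xs))
      ≤ (1-d) * (a k * (f (x (k+1)) - f xs)) := by
    intro k
    have h1 : a (k+1) * b (k+1) ≤ a k * b k + d * a k := by linarith [hAle k]
    have h2 : a k * b k ≤ a k / γ := (le_div_iff₀' hγ).mpr (haA k)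
    have hdγ : (0:ℝ) < 1 + d * γ := by nlinarith
    have h3 : (γ/(1 + d*γ)) * (a (k+1) * b (k+1)) ≤ a k := by
      rw [div_mul_eq_mul_div, div_le_iff₀ hdγ]
      have h2' : γ * (a k * b k) ≤ a k := haA k
      nlinarith [mul_le_mul_of_nonneg_left h1 hγ.le]
    have h4 : (γ/(1 + d*γ)) * (a (k+1) * b (k+1)) * (f (x (k+1)) - f xs)
        ≤ a k * (f (x (k+1)) - f xs) :=
      mul_le_mul_of_nonneg_right h3 (hG (k+1))
    have h5 := mul_le_mul_of_nonneg_left h4 (by linarith : (0:ℝ) ≤ 1 - d)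
    calc ρ * (a (k+1) * b (k+1) * (f (x (k+1)) - f xs))
        = (1-d) * ((γ/(1 + d*γ)) * (a (k+1) * b (k+1)) * (f (x (k+1)) - f xs)) := by
          rw [hρ]; ring
      _ ≤ (1-d) * (a k * (f (x (k+1)) - f xs)) := h5
  set u : ℕ → ℝ := fun k => a (k+1) * b (k+1) * (f (x (k+1)) - f xs) with hu
  have hunn : ∀ k, 0 ≤ u k := fun k =>
    mul_nonneg (mul_nonneg (hapos (k+1)).le (hbpos (k+1)).le) (hG (k+1))
  have hub : ∀ n : ℕ, ∑ k ∈ Finset.range n, u k ≤ E 0 / ρ := by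
    intro n
    rw [le_div_iff₀ hρ0]
    have h6 : ∑ k ∈ Finset.range n, ρ * u k ≤ E 0 :=
      le_trans (Finset.sum_le_sum fun k _ => hterm k) (hsum n)
    calc (∑ k ∈ Finset.range n, u k) * ρ
        = ∑ k ∈ Finset.range n, ρ * u k := by
          rw [Finset.sum_mul]; exact Finset.sum_congr rfl fun k _ => by ring
      _ ≤ E 0 := h6
  have hsummable : Summable u := summable_of_sum_range_le hunn hub
  have htend : Filter.Tendsto u Filter.atTop (nhds 0) :=
    hsummable.tendsto_atTop_zero
  exact (tendsto_add_atTop_iff_nat 1).mp htend
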